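/- If h = s ⋆_d c is the canonical discrete convolution of two sequences s, c ∈ l¹(ℤ²), then (L_M h)(ξ) = e^{-iπ ξᵀDB⁻¹ξ} (L_M s)(ξ) (L_M c)(ξ) for all ξ ∈ ℝ². -/

import Mathlib

open MeasureTheory Matrix Complex

noncomputable section

abbrev V2 : Type := Fin 2 → ℝ
abbrev Z2 : Type := Fin 2 → ℤ
abbrev M2 : Type := Matrix (Fin 2) (Fin 2) ℝ

/-- cast an integer vector to a real vector -/
def zc (k : Z2) : V2 := fun i => (k i : ℝ)

/-- `ePi r = e^{iπ r}` -/
def ePi (r : ℝ) : ℂ := Complex.exp (Real.pi * Complex.I * r)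

/-- quadratic/bilinear form `xᵀ P y` -/
def Q (P : M2) (x y : V2) : ℝ := x ⬝ᵥ P.mulVec y

/-- `√(det (iB))` (note `det(iB) = i² det B` for 2×2 `B`) -/
def sdet (B : M2) : ℂ := ((Complex.I ^ 2 * (B.det : ℂ))) ^ ((1 : ℂ)/2)

/-- the chirp `λ_M(t) = e^{iπ tᵀB⁻¹At}` -/
def lam (A B : M2) (t : V2) : ℂ := ePi (Q (B⁻¹ * A) t t)

/-- the continuous 2D non-separable LCT -/
def LCT (A B D : M2) (f : V2 → ℂ) (ξ : V2) : ℂ :=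
  (sdet B)⁻¹ * ∫ u : V2, f u * ePi (Q (B⁻¹ * A) u u - 2 * Q B⁻¹ u ξ + Q (D * B⁻¹) ξ ξ)

/-- the 2D discrete-time non-separable LCT -/
def DLCT (A B D : M2) (s : Z2 → ℂ) (ξ : V2) : ℂ :=
  (sdet B)⁻¹ * ∑' k : Z2,
    s k * ePi (Q (B⁻¹ * A) (zc k) (zc k) - 2 * Q B⁻¹ (zc k) ξ + Q (D * B⁻¹) ξ ξ)

/-- the canonical (continuous) convolution `⋆_c` -/
def cconv (A B : M2) (f g : V2 → ℂ) (t : V2) : ℂ :=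
  ePi (-(Q (B⁻¹ * A) t t)) * (sdet B)⁻¹ *
    ∫ x : V2, lam A B (t - x) * f (t - x) * (lam A B x * g x)

/-- the canonical semi-discrete convolution `⋆_{sd}` -/
def sdconv (A B : M2) (s : Z2 → ℂ) (g : V2 → ℂ) (t : V2) : ℂ :=
  ePi (-(Q (B⁻¹ * A) t t)) * (sdet B)⁻¹ *
    ∑' k : Z2, lam A B (zc k) * s k * (lam A B (t - zc k) * g (t - zc k))

/-- the canonical discrete convolution `⋆_d` -/
def dconv (A B : M2) (s c : Z2 → ℂ) (l : Z2) : ℂ :=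
  ePi (-(Q (B⁻¹ * A) (zc l) (zc l))) * (sdet B)⁻¹ *
    ∑' k : Z2, lam A B (zc k) * s k * (lam A B (zc (l - k)) * c (l - k))

/-- symplecticity of the block matrix `[A,B;C,D]` -/
def Symp (A B C D : M2) : Prop :=
  A * Bᵀ = B * Aᵀ ∧ C * Dᵀ = D * Cᵀ ∧ A * Dᵀ - B * Cᵀ = 1

/-- the unit half-open square `[0,1)²` -/
def box : Set V2 := Set.univ.pi fun _ => Set.Ico (0:ℝ) 1

/-- real cast of an integer matrix -/
def Mr (M : Matrix (Fin 2) (Fin 2) ℤ) : M2 := M.map (Int.cast : ℤ → ℝ)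

/-- the set `N(M)` of integer points in the fundamental parallelepiped -/
def NM (M : Matrix (Fin 2) (Fin 2) ℤ) : Set Z2 :=
  {k : Z2 | ∃ x : V2, x ∈ box ∧ zc k = (Mr M).mulVec x}

/-- the discrete time Fourier transform -/
def DTFT (d : Z2 → ℂ) (ξ : V2) : ℂ := ∑' k : Z2, d k * ePi (-(2 * (zc k ⬝ᵥ ξ)))

lemma ePi_add (a b : ℝ) : ePi (a + b) = ePi a * ePi b := by
  unfold ePi; rw [← Complex.exp_add]; congr 1; push_cast; ring

lemma norm_ePi (r : ℝ) : ‖ePi r‖ = 1 := by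
  unfold ePi
  have h : (Real.pi : ℂ) * Complex.I * r = ((Real.pi * r : ℝ) : ℂ) * Complex.I := by
    push_cast; ring
  rw [h, Complex.norm_exp]
  simp

lemma norm_lam (A B : M2) (t : V2) : ‖lam A B t‖ = 1 := norm_ePi _

lemma zc_add (k m : Z2) : zc (k + m) = zc k + zc m := by
  funext i; simp [zc]

lemma Q_add_left (P : M2) (x y z : V2) : Q P (x + y) z = Q P x z + Q P y z := by
  simp [Q, add_dotProduct]

def φd : Z2 × Z2 ≃ Z2 × Z2 where
  toFun p := (p.1 + p.2, p.1)
  invFun p := (p.2, p.1 - p.2)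
  left_inv p := by ext <;> simp
  right_inv p := by ext <;> simp

lemma key_phase (x y : ℂ) (a b cc d e f : ℝ) (h : a + b + cc = d + e + f) :
    ePi a * x * (ePi b * y) * ePi cc = ePi d * (x * ePi e) * (y * ePi f) := by
  calc ePi a * x * (ePi b * y) * ePi cc = x * y * (ePi a * ePi b * ePi cc) := by ring
    _ = x * y * ePi (a + b + cc) := by rw [← ePi_add, ← ePi_add]
    _ = x * y * ePi (d + e + f) := by rw [h]
    _ = x * y * (ePi d * ePi e * ePi f) := by rw [← ePi_add, ← ePi_add]
    _ = _ := by ring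

/-- the double-sum integrand -/
def Gd (A B D : M2) (s c : Z2 → ℂ) (ξ : V2) (p : Z2 × Z2) : ℂ :=
  lam A B (zc p.2) * s p.2 * (lam A B (zc (p.1 - p.2)) * c (p.1 - p.2)) *
    ePi (-(2 * Q B⁻¹ (zc p.1) ξ) + Q (D * B⁻¹) ξ ξ)

/-- Discrete canonical convolution theorem:
`L_M (s ⋆_d c)(ξ) = e^{-iπ ξᵀDB⁻¹ξ} (L_M s)(ξ) (L_M c)(ξ)`. -/
theorem dlct_dconv (A B C D : M2) (hSymp : Symp A B C D) (hB : B.det ≠ 0)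
    (s c : Z2 → ℂ)
    (hs : Summable fun k => ‖s k‖) (hc : Summable fun k => ‖c k‖) :
    ∀ ξ : V2, DLCT A B D (dconv A B s c) ξ =
      ePi (-(Q (D * B⁻¹) ξ ξ)) * DLCT A B D s ξ * DLCT A B D c ξ := by
  intro ξ
  set S : ℂ := (sdet B)⁻¹ with hS
  -- norms of the sequences appearing in DLCT
  have hfn : Summable fun k : Z2 =>
      ‖s k * ePi (Q (B⁻¹ * A) (zc k) (zc k) - 2 * Q B⁻¹ (zc k) ξ + Q (D * B⁻¹) ξ ξ)‖ := by
    simp only [norm_mul, norm_ePi, mul_one]; exact hs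
  have hgn : Summable fun k : Z2 =>
      ‖c k * ePi (Q (B⁻¹ * A) (zc k) (zc k) - 2 * Q B⁻¹ (zc k) ξ + Q (D * B⁻¹) ξ ξ)‖ := by
    simp only [norm_mul, norm_ePi, mul_one]; exact hc
  -- summability of the product over Z2 × Z2
  have hfg : Summable fun p : Z2 × Z2 => ‖s p.1‖ * ‖c p.2‖ :=
    hs.mul_of_nonneg hc (fun _ => norm_nonneg _) (fun _ => norm_nonneg _)
  -- summability of Gd
  have hGnorm : (fun p : Z2 × Z2 => ‖Gd A B D s c ξ p‖)
      = fun p => ‖s p.2‖ * ‖c (p.1 - p.2)‖ := by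
    funext p
    simp only [Gd, norm_mul, norm_ePi, norm_lam, mul_one, one_mul]
  have hGsum : Summable (Gd A B D s c ξ) := by
    apply Summable.of_norm
    rw [hGnorm]
    rw [← Equiv.summable_iff φd]
    have : ((fun p : Z2 × Z2 => ‖s p.2‖ * ‖c (p.1 - p.2)‖) ∘ φd)
        = fun p : Z2 × Z2 => ‖s p.1‖ * ‖c p.2‖ := by
      funext p
      simp [φd]
    rw [this]
    exact hfg
  -- per-l identity
  have hterm : ∀ l : Z2,
      dconv A B s c l *
        ePi (Q (B⁻¹ * A) (zc l) (zc l) - 2 * Q B⁻¹ (zc l) ξ + Q (D * B⁻¹) ξ ξ)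
      = S * ∑' k : Z2, Gd A B D s c ξ (l, k) := by
    intro l
    unfold dconv Gd
    rw [← hS]
    show _ = S * ∑' k : Z2, lam A B (zc k) * s k * (lam A B (zc (l - k)) * c (l - k)) *
      ePi (-(2 * Q B⁻¹ (zc l) ξ) + Q (D * B⁻¹) ξ ξ)
    rw [tsum_mul_right]
    have hph : ePi (-(Q (B⁻¹ * A) (zc l) (zc l))) *
        ePi (Q (B⁻¹ * A) (zc l) (zc l) - 2 * Q B⁻¹ (zc l) ξ + Q (D * B⁻¹) ξ ξ)
        = ePi (-(2 * Q B⁻¹ (zc l) ξ) + Q (D * B⁻¹) ξ ξ) := by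
      rw [← ePi_add]; ring_nf
    calc ePi (-(Q (B⁻¹ * A) (zc l) (zc l))) * S *
          (∑' k : Z2, lam A B (zc k) * s k * (lam A B (zc (l - k)) * c (l - k))) *
          ePi (Q (B⁻¹ * A) (zc l) (zc l) - 2 * Q B⁻¹ (zc l) ξ + Q (D * B⁻¹) ξ ξ)
        = S * ((∑' k : Z2, lam A B (zc k) * s k * (lam A B (zc (l - k)) * c (l - k))) *
            (ePi (-(Q (B⁻¹ * A) (zc l) (zc l))) *
             ePi (Q (B⁻¹ * A) (zc l) (zc l) - 2 * Q B⁻¹ (zc l) ξ + Q (D * B⁻¹) ξ ξ))) := by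
          ring
      _ = S * ((∑' k : Z2, lam A B (zc k) * s k * (lam A B (zc (l - k)) * c (l - k))) *
            ePi (-(2 * Q B⁻¹ (zc l) ξ) + Q (D * B⁻¹) ξ ξ)) := by rw [hph]
  -- LHS as a double sum
  have hLHS : DLCT A B D (dconv A B s c) ξ
      = S * S * ∑' p : Z2 × Z2, Gd A B D s c ξ p := by
    unfold DLCT
    rw [← hS]
    rw [tsum_congr hterm, tsum_mul_left, hGsum.tsum_prod' hGsum.prod_factor]
    ring
  -- now change variables
  have hchange : (∑' p : Z2 × Z2, Gd A B D s c ξ p)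
      = ∑' q : Z2 × Z2, Gd A B D s c ξ (φd q) := (Equiv.tsum_eq φd _).symm
  -- pointwise identity between the two double-sum integrands
  have hpoint : ∀ q : Z2 × Z2, Gd A B D s c ξ (φd q)
      = ePi (-(Q (D * B⁻¹) ξ ξ)) *
        ((s q.1 * ePi (Q (B⁻¹ * A) (zc q.1) (zc q.1) - 2 * Q B⁻¹ (zc q.1) ξ + Q (D * B⁻¹) ξ ξ)) *
         (c q.2 * ePi (Q (B⁻¹ * A) (zc q.2) (zc q.2) - 2 * Q B⁻¹ (zc q.2) ξ + Q (D * B⁻¹) ξ ξ))) := by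
    intro ⟨k, m⟩
    show Gd A B D s c ξ (k + m, k) = _
    unfold Gd lam
    simp only [add_sub_cancel_left]
    have h := key_phase (s k) (c m)
      (Q (B⁻¹ * A) (zc k) (zc k)) (Q (B⁻¹ * A) (zc m) (zc m))
      (-(2 * Q B⁻¹ (zc (k + m)) ξ) + Q (D * B⁻¹) ξ ξ)
      (-(Q (D * B⁻¹) ξ ξ))
      (Q (B⁻¹ * A) (zc k) (zc k) - 2 * Q B⁻¹ (zc k) ξ + Q (D * B⁻¹) ξ ξ)
      (Q (B⁻¹ * A) (zc m) (zc m) - 2 * Q B⁻¹ (zc m) ξ + Q (D * B⁻¹) ξ ξ)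
      (by rw [zc_add, Q_add_left]; ring)
    rw [h]; ring
  -- RHS as a double sum
  have hRHS : ePi (-(Q (D * B⁻¹) ξ ξ)) * DLCT A B D s ξ * DLCT A B D c ξ
      = S * S * (ePi (-(Q (D * B⁻¹) ξ ξ)) *
          ∑' q : Z2 × Z2,
            (s q.1 * ePi (Q (B⁻¹ * A) (zc q.1) (zc q.1) - 2 * Q B⁻¹ (zc q.1) ξ + Q (D * B⁻¹) ξ ξ)) *
            (c q.2 * ePi (Q (B⁻¹ * A) (zc q.2) (zc q.2) - 2 * Q B⁻¹ (zc q.2) ξ + Q (D * B⁻¹) ξ ξ))) := by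
    unfold DLCT
    rw [← hS, ← tsum_mul_tsum_of_summable_norm hfn hgn]
    ring
  rw [hLHS, hchange, hRHS, tsum_congr hpoint, tsum_mul_left]
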